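/- If a row vector of the PDD matrix consists of the increasing sequence of distances d₁(p) ≤ … ≤ d_k(p) from p to its k nearest neighbours in a set S, and every point of S as well as p is perturbed by at most ε in Euclidean distance, then each d_i changes by at most 2ε: the i-th smallest distance from the perturbed point to the perturbed set differs from d_i(p) by at most 2ε. -/

import Mathlib

/-- The `i`-th smallest (0-indexed) distance from `p` to the points of the finite set `S`. -/
noncomputable def kthDist {n : ℕ} (S : Finset (EuclideanSpace ℝ (Fin n)))
    (p : EuclideanSpace ℝ (Fin n)) (i : ℕ) : ℝ :=
  (Multiset.sort (S.val.map fun q => dist q p) (· ≤ ·)).getD i 0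

/-- countP is monotone in the predicate. -/
theorem my_countP_mono {α : Type*} (p q : α → Prop) [DecidablePred p] [DecidablePred q]
    (s : Multiset α) (h : ∀ x ∈ s, p x → q x) : s.countP p ≤ s.countP q := by
  revert h
  refine Quot.inductionOn s ?_
  intro l h
  simpa using List.countP_mono_left (l := l) (p := (p ·)) (q := (q ·)) (by simpa using h)

/-- For a sorted list, the `i`-th element is `≤ x` iff at least `i+1` elements are `≤ x`. -/
theorem sorted_getD_le_iff {L : List ℝ} (hL : L.Pairwise (· ≤ ·)) {i : ℕ} (hi : i < L.length)
    (x : ℝ) : L.getD i 0 ≤ x ↔ i + 1 ≤ L.countP (fun a => a ≤ x) := by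
  rw [List.getD_eq_getElem L 0 hi]
  have hpair := List.pairwise_iff_getElem.mp hL
  constructor
  · intro h
    have hsub : (L.take (i + 1)).countP (fun a => a ≤ x) ≤ L.countP (fun a => a ≤ x) :=
      (List.take_sublist (i + 1) L).countP_le
    have hall : (L.take (i + 1)).countP (fun a => a ≤ x) = (L.take (i + 1)).length := by
      rw [List.countP_eq_length]
      intro a ha
      obtain ⟨j, hj, rfl⟩ := List.mem_take_iff_getElem.mp ha
      have hji : j ≤ i := by omega
      have : L[j] ≤ L[i] := by
        rcases lt_or_eq_of_le hji with hlt | rfl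
        · exact hpair j i (by omega) hi hlt
        · exact le_refl _
      simpa using le_trans this h
    have hlen : (L.take (i + 1)).length = i + 1 := by
      simp [List.length_take]; omega
    omega
  · intro h
    by_contra hx
    push_neg at hx
    have hdrop : (L.drop i).countP (fun a => a ≤ x) = 0 := by
      rw [List.countP_eq_zero]
      intro a ha
      obtain ⟨j, hj, rfl⟩ := List.mem_drop_iff_getElem.mp ha
      have : L[i] ≤ L[i + j] := by
        rcases Nat.eq_zero_or_pos j with rfl | hjpos
        · simp
        · exact hpair i (i + j) hi (by omega) (by omega)
      simp only [decide_eq_true_eq]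
      intro hle
      exact absurd (le_trans this hle) (not_le.mpr hx)
    have hsplit : L.countP (fun a => a ≤ x)
        = (L.take i).countP (fun a => a ≤ x) + (L.drop i).countP (fun a => a ≤ x) := by
      conv_lhs => rw [← List.take_append_drop i L]
      rw [List.countP_append]
    have htake : (L.take i).countP (fun a => a ≤ x) ≤ i := by
      calc (L.take i).countP (fun a => a ≤ x) ≤ (L.take i).length := List.countP_le_length
        _ ≤ i := by simp [List.length_take]
    omega

/-- For a multiset, the `i`-th smallest element is `≤ x` iff at least `i+1` elements are `≤ x`. -/
theorem kth_le_iff {M : Multiset ℝ} {i : ℕ} (hi : i < Multiset.card M) (x : ℝ) :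
    (Multiset.sort M (· ≤ ·)).getD i 0 ≤ x ↔ i + 1 ≤ M.countP (fun a => a ≤ x) := by
  have hs : (Multiset.sort M (· ≤ ·)).Pairwise (· ≤ ·) := Multiset.pairwise_sort M _
  have hlen : i < (Multiset.sort M (· ≤ ·)).length := by
    rw [Multiset.length_sort]; exact hi
  rw [sorted_getD_le_iff hs hlen x]
  have : M.countP (fun a => a ≤ x) = (Multiset.sort M (· ≤ ·)).countP (fun a => a ≤ x) := by
    conv_lhs => rw [← Multiset.sort_eq M (· ≤ ·)]
    rw [Multiset.coe_countP]
  rw [this]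

theorem kthDist_stability {n : ℕ} (S S' : Finset (EuclideanSpace ℝ (Fin n)))
    (ε : ℝ) (hε : 0 ≤ ε)
    (φ : {x // x ∈ S} ≃ {x // x ∈ S'})
    (hφ : ∀ q : {x // x ∈ S}, dist ((φ q : EuclideanSpace ℝ (Fin n))) (q : EuclideanSpace ℝ (Fin n)) ≤ ε)
    (p p' : EuclideanSpace ℝ (Fin n)) (hp : dist p' p ≤ ε)
    (k : ℕ) (hk : k ≤ S.card) (i : ℕ) (hi : i < k) :
    |kthDist S' p' i - kthDist S p i| ≤ 2 * ε := by
  classical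
  have hcard : S'.card = S.card := by
    have := Fintype.card_congr φ
    simpa [Fintype.card_coe] using this.symm
  have hiS : i < Multiset.card (S.val.map fun q => dist q p) := by
    simp only [Multiset.card_map]; exact lt_of_lt_of_le hi hk
  have hiS' : i < Multiset.card (S'.val.map fun q => dist q p') := by
    simp only [Multiset.card_map]
    rw [show Multiset.card S'.val = S'.card from rfl, hcard]
    exact lt_of_lt_of_le hi hk
  -- rewrite multisets through attach
  have hattach : (Finset.univ : Finset {x // x ∈ S}).val.map
      (fun q => (φ q).val)
      = S'.val := by
    have h1 : (Finset.univ : Finset {x // x ∈ S}).map φ.toEmbedding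
        = (Finset.univ : Finset {x // x ∈ S'}) := Finset.map_univ_equiv φ
    calc (Finset.univ : Finset {x // x ∈ S}).val.map (fun q => (φ q).val)
        = (((Finset.univ : Finset {x // x ∈ S}).val.map φ.toEmbedding).map
            Subtype.val) := by
          rw [Multiset.map_map]; rfl
      _ = ((Finset.univ : Finset {x // x ∈ S'}).val.map Subtype.val) := by
          rw [← Finset.map_val, h1]
      _ = S'.val := by
          rw [Finset.univ_eq_attach, Finset.attach_val]
          exact Multiset.attach_map_val _
  have hattachS : (Finset.univ : Finset {x // x ∈ S}).val.map
      Subtype.val = S.val := by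
    rw [Finset.univ_eq_attach, Finset.attach_val]
    exact Multiset.attach_map_val _
  -- count transfer
  have key : ∀ x : ℝ,
      (S.val.map fun q => dist q p).countP (fun a => a ≤ x)
      ≤ (S'.val.map fun q => dist q p').countP (fun a => a ≤ x + 2 * ε) := by
    intro x
    rw [← hattach, ← hattachS, Multiset.map_map, Multiset.map_map,
      Multiset.countP_map, Multiset.countP_map]
    apply Multiset.card_le_card
    apply Multiset.monotone_filter_right
    intro q hq
    simp only [Function.comp] at hq ⊢
    have h1 : dist ((φ q : EuclideanSpace ℝ (Fin n))) p'
        ≤ dist ((φ q : EuclideanSpace ℝ (Fin n))) (q : EuclideanSpace ℝ (Fin n))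
          + dist (q : EuclideanSpace ℝ (Fin n)) p + dist p p' :=
      dist_triangle4 _ _ _ _
    have := hφ q
    have hpp : dist p p' ≤ ε := by rw [dist_comm]; exact hp
    linarith
  have key' : ∀ x : ℝ,
      (S'.val.map fun q => dist q p').countP (fun a => a ≤ x)
      ≤ (S.val.map fun q => dist q p).countP (fun a => a ≤ x + 2 * ε) := by
    intro x
    rw [← hattach, ← hattachS, Multiset.map_map, Multiset.map_map,
      Multiset.countP_map, Multiset.countP_map]
    apply Multiset.card_le_card
    apply Multiset.monotone_filter_right
    intro q hq
    simp only [Function.comp] at hq ⊢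
    have h1 : dist (q : EuclideanSpace ℝ (Fin n)) p
        ≤ dist (q : EuclideanSpace ℝ (Fin n)) ((φ q : EuclideanSpace ℝ (Fin n)))
          + dist ((φ q : EuclideanSpace ℝ (Fin n))) p' + dist p' p :=
      dist_triangle4 _ _ _ _
    have h2 := hφ q
    rw [dist_comm] at h2
    linarith
  set d := kthDist S p i with hd
  set d' := kthDist S' p' i with hd'
  have h1 : d' ≤ d + 2 * ε := by
    rw [hd', kthDist]
    rw [kth_le_iff hiS' (d + 2 * ε)]
    refine le_trans ?_ (key d)
    rw [← kth_le_iff hiS d]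
    exact le_rfl
  have h2 : d ≤ d' + 2 * ε := by
    rw [hd, kthDist]
    rw [kth_le_iff hiS (d' + 2 * ε)]
    refine le_trans ?_ (key' d')
    rw [← kth_le_iff hiS' d']
    exact le_rfl
  rw [abs_sub_le_iff]
  constructor <;> linarith
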